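/- Let v be a dense vertex in almost-clique C_j of a decomposition with parameter ε < 1/5, and let R be the number of paths v, x, u of length 2 with u ∈ C_j \ N(v). Then a(v)(1−2ε)Δ ≤ R ≤ εΔ²(2−ε), where a(v) = |C_j \ N(v)|. -/

import Mathlib

open Finset

attribute [local instance] Classical.propDecidable

variable {V : Type*}

/-- `uv` is a friend edge: they are adjacent and share at least `(1-ε)Δ` neighbors. -/
def friendAdj [Fintype V] [DecidableEq V] (G : SimpleGraph V) [DecidableRel G.Adj]
    (Δ : ℕ) (ε : ℝ) (u v : V) : Prop :=
  G.Adj u v ∧ (1 - ε) * (Δ : ℝ) ≤ ((G.neighborFinset u ∩ G.neighborFinset v).card : ℝ)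

/-- The friends of `v`. -/
noncomputable def friends [Fintype V] [DecidableEq V] (G : SimpleGraph V) [DecidableRel G.Adj]
    (Δ : ℕ) (ε : ℝ) (v : V) : Finset V :=
  Finset.univ.filter (fun w => friendAdj G Δ ε v w)

/-- `v` is dense: it has at least `(1-ε)Δ` friends. -/
def isDense [Fintype V] [DecidableEq V] (G : SimpleGraph V) [DecidableRel G.Adj]
    (Δ : ℕ) (ε : ℝ) (v : V) : Prop :=
  (1 - ε) * (Δ : ℝ) ≤ ((friends G Δ ε v).card : ℝ)

/-- The graph on dense vertices whose edges are the friend edges; its connected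
components are the almost-cliques. -/
def friendGraph [Fintype V] [DecidableEq V] (G : SimpleGraph V) [DecidableRel G.Adj]
    (Δ : ℕ) (ε : ℝ) : SimpleGraph V where
  Adj u v := friendAdj G Δ ε u v ∧ isDense G Δ ε u ∧ isDense G Δ ε v
  symm := ⟨by
    rintro u v ⟨⟨hadj, hcard⟩, hu, hv⟩
    exact ⟨⟨hadj.symm, by rwa [Finset.inter_comm]⟩, hv, hu⟩⟩
  loopless := ⟨fun v h => G.loopless.irrefl v h.1.1⟩

section Aux

variable [Fintype V] [DecidableEq V] (G : SimpleGraph V) [DecidableRel G.Adj] (Δ : ℕ) (ε : ℝ)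

lemma mem_friends {v w : V} : w ∈ friends G Δ ε v ↔ friendAdj G Δ ε v w := by
  simp [friends]

lemma friends_subset (v : V) : friends G Δ ε v ⊆ G.neighborFinset v := by
  intro w hw
  rw [mem_friends] at hw
  simpa using hw.1

lemma tri (a b c : V) :
    (G.neighborFinset a ∩ G.neighborFinset b).card
      + (G.neighborFinset b ∩ G.neighborFinset c).card
      ≤ G.degree b + (G.neighborFinset a ∩ G.neighborFinset c).card := by
  have h1 := Finset.card_union_add_card_inter
    (G.neighborFinset a ∩ G.neighborFinset b) (G.neighborFinset b ∩ G.neighborFinset c)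
  have h2 : ((G.neighborFinset a ∩ G.neighborFinset b) ∪
      (G.neighborFinset b ∩ G.neighborFinset c)).card ≤ G.degree b := by
    rw [← G.card_neighborFinset_eq_degree b]
    apply Finset.card_le_card
    intro x hx
    simp only [Finset.mem_union, Finset.mem_inter] at hx
    tauto
  have h3 : ((G.neighborFinset a ∩ G.neighborFinset b) ∩
      (G.neighborFinset b ∩ G.neighborFinset c)).card
      ≤ (G.neighborFinset a ∩ G.neighborFinset c).card := by
    apply Finset.card_le_card
    intro x hx
    simp only [Finset.mem_inter] at hx ⊢
    tauto
  omega

lemma tri_real (hΔ : ∀ w, G.degree w ≤ Δ) {a b c : V} {s t : ℝ}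
    (h1 : s ≤ ((G.neighborFinset a ∩ G.neighborFinset b).card : ℝ))
    (h2 : t ≤ ((G.neighborFinset b ∩ G.neighborFinset c).card : ℝ)) :
    s + t - Δ ≤ ((G.neighborFinset a ∩ G.neighborFinset c).card : ℝ) := by
  have h3 := tri G a b c
  have h4 := hΔ b
  have h3' : ((G.neighborFinset a ∩ G.neighborFinset b).card : ℝ)
      + ((G.neighborFinset b ∩ G.neighborFinset c).card : ℝ)
      ≤ (G.degree b : ℝ) + ((G.neighborFinset a ∩ G.neighborFinset c).card : ℝ) := by
    exact_mod_cast h3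
  have h4' : (G.degree b : ℝ) ≤ (Δ : ℝ) := by exact_mod_cast h4
  linarith

lemma inter_of_common (hΔ : ∀ w, G.degree w ≤ Δ) {a b z : V}
    (h1 : friendAdj G Δ ε a z) (h2 : friendAdj G Δ ε b z) :
    (1 - 2*ε) * (Δ : ℝ) ≤ ((G.neighborFinset a ∩ G.neighborFinset b).card : ℝ) := by
  have h2' : (1 - ε) * (Δ : ℝ) ≤ ((G.neighborFinset z ∩ G.neighborFinset b).card : ℝ) := by
    rw [Finset.inter_comm]; exact h2.2
  have := tri_real G Δ (hΔ := hΔ) (a := a) (b := z) (c := b) h1.2 h2'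
  linarith

lemma common_friend (hΔ : ∀ w, G.degree w ≤ Δ) (hΔ1 : (1:ℝ) ≤ (Δ:ℝ)) (hε : ε < 1/5)
    {a b : V} (ha : isDense G Δ ε a) (hb : isDense G Δ ε b)
    (hab : (1 - 3*ε) * (Δ:ℝ) ≤ ((G.neighborFinset a ∩ G.neighborFinset b).card : ℝ)) :
    ∃ z, friendAdj G Δ ε a z ∧ friendAdj G Δ ε b z := by
  have hsub : friends G Δ ε a ∪ friends G Δ ε b ⊆ G.neighborFinset a ∪ G.neighborFinset b :=
    Finset.union_subset_union (friends_subset G Δ ε a) (friends_subset G Δ ε b)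
  have h1 := Finset.card_union_add_card_inter (friends G Δ ε a) (friends G Δ ε b)
  have h2 := Finset.card_union_add_card_inter (G.neighborFinset a) (G.neighborFinset b)
  have hcard := Finset.card_le_card hsub
  have hda := hΔ a
  have hdb := hΔ b
  rw [G.card_neighborFinset_eq_degree, G.card_neighborFinset_eq_degree] at h2
  have hpos : 0 < (friends G Δ ε a ∩ friends G Δ ε b).card := by
    have h1' : ((friends G Δ ε a ∪ friends G Δ ε b).card : ℝ)
        + ((friends G Δ ε a ∩ friends G Δ ε b).card : ℝ)
        = ((friends G Δ ε a).card : ℝ) + ((friends G Δ ε b).card : ℝ) := by exact_mod_cast h1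
    have h2' : ((G.neighborFinset a ∪ G.neighborFinset b).card : ℝ)
        + ((G.neighborFinset a ∩ G.neighborFinset b).card : ℝ)
        = (G.degree a : ℝ) + (G.degree b : ℝ) := by exact_mod_cast h2
    have hcard' : ((friends G Δ ε a ∪ friends G Δ ε b).card : ℝ)
        ≤ ((G.neighborFinset a ∪ G.neighborFinset b).card : ℝ) := by exact_mod_cast hcard
    have hda' : (G.degree a : ℝ) ≤ (Δ:ℝ) := by exact_mod_cast hda
    have hdb' : (G.degree b : ℝ) ≤ (Δ:ℝ) := by exact_mod_cast hdb
    have : (0:ℝ) < ((friends G Δ ε a ∩ friends G Δ ε b).card : ℝ) := by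
      unfold isDense at ha hb
      nlinarith
    exact_mod_cast this
  obtain ⟨z, hz⟩ := Finset.card_pos.mp hpos
  rw [Finset.mem_inter, mem_friends, mem_friends] at hz
  exact ⟨z, hz⟩

lemma degree_ge (v : V) (hv : isDense G Δ ε v) : (1 - ε) * (Δ:ℝ) ≤ (G.degree v : ℝ) := by
  have h := Finset.card_le_card (friends_subset G Δ ε v)
  rw [G.card_neighborFinset_eq_degree] at h
  have : ((friends G Δ ε v).card : ℝ) ≤ (G.degree v : ℝ) := by exact_mod_cast h
  exact le_trans hv this

lemma walk_bound (hΔ : ∀ w, G.degree w ≤ Δ) (hε0 : 0 < ε) (hε : ε < 1/5) :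
    ∀ {a b : V} (_ : (friendGraph G Δ ε).Walk a b), isDense G Δ ε a →
      isDense G Δ ε b ∧
        (1 - 2*ε) * (Δ:ℝ) ≤ ((G.neighborFinset a ∩ G.neighborFinset b).card : ℝ) := by
  intro a b p
  induction p with
  | nil =>
    intro hA
    refine ⟨hA, ?_⟩
    rw [Finset.inter_self, G.card_neighborFinset_eq_degree]
    have := degree_ge G Δ ε _ hA
    have hΔ0 : (0:ℝ) ≤ (Δ:ℝ) := Nat.cast_nonneg _
    nlinarith
  | @cons a w b h q ih =>
    intro hA
    obtain ⟨⟨hadj, hcard⟩, hda, hdw⟩ := (h : friendAdj G Δ ε a w ∧ isDense G Δ ε a ∧ isDense G Δ ε w)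
    obtain ⟨hdb, hwb⟩ := ih hdw
    refine ⟨hdb, ?_⟩
    have hΔ1 : (1:ℝ) ≤ (Δ:ℝ) := by
      have : 0 < G.degree a := by
        rw [← G.card_neighborFinset_eq_degree]
        exact Finset.card_pos.mpr ⟨w, by simpa using hadj⟩
      have := lt_of_lt_of_le this (hΔ a)
      exact_mod_cast this
    have hchain := tri_real G Δ (hΔ := hΔ) (a := a) (b := w) (c := b) hcard hwb
    have h3 : (1 - 3*ε) * (Δ:ℝ) ≤ ((G.neighborFinset a ∩ G.neighborFinset b).card : ℝ) := by
      nlinarith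
    obtain ⟨z, hz1, hz2⟩ := common_friend G Δ ε hΔ hΔ1 hε hA hdb h3
    exact inter_of_common G Δ ε hΔ hz1 hz2

end Aux

/-- Bounds on `R`, the number of length-2 paths `v, x, u` with `u ∈ C_j \ N(v)`:
`a(v)(1−2ε)Δ ≤ R ≤ εΔ²(2−ε)`. -/
theorem stmt_19 [Fintype V] [DecidableEq V] (G : SimpleGraph V) [DecidableRel G.Adj]
    (Δ : ℕ) (ε : ℝ) (hΔ : ∀ w, G.degree w ≤ Δ) (hε0 : 0 < ε) (hε : ε < 1/5)
    (v : V) (hv : isDense G Δ ε v) :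
    let Cv := Finset.univ.filter (fun u => (friendGraph G Δ ε).Reachable v u)
    let R := ((Finset.univ ×ˢ Finset.univ : Finset (V × V)).filter
        (fun p => G.Adj v p.1 ∧ G.Adj p.1 p.2 ∧ p.2 ∈ Cv ∧ ¬ G.Adj v p.2)).card
    ((Cv \ G.neighborFinset v).card : ℝ) * ((1 - 2*ε) * (Δ : ℝ)) ≤ (R : ℝ)
      ∧ (R : ℝ) ≤ ε * (Δ : ℝ)^2 * (2 - ε) := by
  intro Cv R
  set S := ((Finset.univ ×ˢ Finset.univ : Finset (V × V)).filter
      (fun p => G.Adj v p.1 ∧ G.Adj p.1 p.2 ∧ p.2 ∈ Cv ∧ ¬ G.Adj v p.2)) with hS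
  have hR : R = S.card := rfl
  set T := Cv \ G.neighborFinset v with hT
  constructor
  · -- lower bound
    have hfib : S.card = ∑ u ∈ T, (S.filter (fun p => p.2 = u)).card := by
      apply Finset.card_eq_sum_card_fiberwise (f := Prod.snd)
      intro p hp
      rw [Finset.mem_coe] at hp ⊢
      rw [hS, Finset.mem_filter] at hp
      obtain ⟨-, h1, h2, h3, h4⟩ := hp
      rw [hT, Finset.mem_sdiff]
      exact ⟨h3, by simpa using h4⟩
    have hfibcard : ∀ u ∈ T, (S.filter (fun p => p.2 = u)).card
        = (G.neighborFinset v ∩ G.neighborFinset u).card := by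
      intro u hu
      rw [hT, Finset.mem_sdiff] at hu
      have himg : S.filter (fun p => p.2 = u)
          = (G.neighborFinset v ∩ G.neighborFinset u).image (fun x => (x, u)) := by
        ext p
        simp only [hS, Finset.mem_filter, Finset.mem_image, Finset.mem_inter,
          SimpleGraph.mem_neighborFinset, Finset.mem_product, Finset.mem_univ, true_and]
        constructor
        · rintro ⟨⟨h1, h2, h3, h4⟩, h5⟩
          exact ⟨p.1, ⟨h1, by rw [← h5]; exact h2.symm⟩, by rw [← h5]⟩
        · rintro ⟨x, ⟨hx1, hx2⟩, rfl⟩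
          exact ⟨⟨hx1, hx2.symm, hu.1, fun hadj => hu.2 (by simpa using hadj)⟩, rfl⟩
      rw [himg, Finset.card_image_of_injective _ (fun x y h => (Prod.ext_iff.mp h).1)]
    have hsum : (R : ℝ) = ∑ u ∈ T, ((G.neighborFinset v ∩ G.neighborFinset u).card : ℝ) := by
      rw [hR, hfib]
      push_cast
      exact Finset.sum_congr rfl (fun u hu => by rw [hfibcard u hu])
    rw [hsum]
    have hlow : ∀ u ∈ T, (1 - 2*ε) * (Δ:ℝ)
        ≤ ((G.neighborFinset v ∩ G.neighborFinset u).card : ℝ) := by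
      intro u hu
      rw [hT, Finset.mem_sdiff] at hu
      have hreach : (friendGraph G Δ ε).Reachable v u := by
        have := hu.1
        simp only [Cv, Finset.mem_filter, Finset.mem_univ, true_and] at this
        exact this
      exact hreach.elim (fun p => (walk_bound G Δ ε hΔ hε0 hε p hv).2)
    calc (T.card : ℝ) * ((1 - 2*ε) * (Δ:ℝ)) = T.card • ((1 - 2*ε) * (Δ:ℝ)) := by
          rw [nsmul_eq_mul]
      _ ≤ ∑ u ∈ T, ((G.neighborFinset v ∩ G.neighborFinset u).card : ℝ) :=
          Finset.card_nsmul_le_sum T _ _ hlow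
  · -- upper bound
    have hfib2 : S.card = ∑ x ∈ G.neighborFinset v, (S.filter (fun p => p.1 = x)).card := by
      apply Finset.card_eq_sum_card_fiberwise (f := Prod.fst)
      intro p hp
      rw [Finset.mem_coe] at hp ⊢
      rw [hS, Finset.mem_filter] at hp
      simpa using hp.2.1
    have hfb : ∀ x ∈ G.neighborFinset v, (S.filter (fun p => p.1 = x)).card
        ≤ (G.neighborFinset x \ G.neighborFinset v).card := by
      intro x hx
      apply Finset.card_le_card_of_injOn Prod.snd
      · intro p hp
        rw [Finset.mem_coe] at hp ⊢
        rw [Finset.mem_filter, hS, Finset.mem_filter] at hp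
        obtain ⟨⟨-, h1, h2, h3, h4⟩, h5⟩ := hp
        rw [Finset.mem_sdiff, SimpleGraph.mem_neighborFinset, SimpleGraph.mem_neighborFinset]
        exact ⟨by rw [← h5]; exact h2, h4⟩
      · intro p hp q hq hpq
        rw [Finset.coe_filter, Set.mem_setOf_eq] at hp hq
        exact Prod.ext (hp.2.trans hq.2.symm) hpq
    have hkey : ∀ x ∈ friends G Δ ε v,
        ((G.neighborFinset x \ G.neighborFinset v).card : ℝ) ≤ ε * (Δ:ℝ) := by
      intro x hx
      have hfr := (mem_friends G Δ ε).mp hx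
      have hsplit := Finset.card_sdiff_add_card_inter (G.neighborFinset x) (G.neighborFinset v)
      rw [G.card_neighborFinset_eq_degree] at hsplit
      have hdx := hΔ x
      have hint : (1 - ε) * (Δ:ℝ) ≤ ((G.neighborFinset x ∩ G.neighborFinset v).card : ℝ) := by
        rw [Finset.inter_comm]; exact hfr.2
      have hsplit' : ((G.neighborFinset x \ G.neighborFinset v).card : ℝ)
          + ((G.neighborFinset x ∩ G.neighborFinset v).card : ℝ) = (G.degree x : ℝ) := by
        exact_mod_cast hsplit
      have hdx' : (G.degree x : ℝ) ≤ (Δ:ℝ) := by exact_mod_cast hdx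
      linarith
    have hany : ∀ x : V, ((G.neighborFinset x \ G.neighborFinset v).card : ℝ) ≤ (Δ:ℝ) := by
      intro x
      have h1 : (G.neighborFinset x \ G.neighborFinset v).card ≤ G.degree x := by
        rw [← G.card_neighborFinset_eq_degree]
        exact Finset.card_le_card (Finset.sdiff_subset)
      have := le_trans h1 (hΔ x)
      exact_mod_cast this
    have hFsub := friends_subset G Δ ε v
    have hsum2 : (R : ℝ) ≤ ∑ x ∈ G.neighborFinset v,
        ((G.neighborFinset x \ G.neighborFinset v).card : ℝ) := by
      rw [hR, hfib2]
      push_cast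
      apply Finset.sum_le_sum
      intro x hx
      exact_mod_cast hfb x hx
    have hsplitsum : ∑ x ∈ G.neighborFinset v,
        ((G.neighborFinset x \ G.neighborFinset v).card : ℝ)
        = (∑ x ∈ G.neighborFinset v \ friends G Δ ε v,
            ((G.neighborFinset x \ G.neighborFinset v).card : ℝ))
          + ∑ x ∈ friends G Δ ε v, ((G.neighborFinset x \ G.neighborFinset v).card : ℝ) :=
      (Finset.sum_sdiff hFsub).symm
    have hb1 : ∑ x ∈ friends G Δ ε v, ((G.neighborFinset x \ G.neighborFinset v).card : ℝ)
        ≤ ((friends G Δ ε v).card : ℝ) * (ε * (Δ:ℝ)) := by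
      calc _ ≤ (friends G Δ ε v).card • (ε * (Δ:ℝ)) :=
            Finset.sum_le_card_nsmul _ _ _ hkey
        _ = _ := by rw [nsmul_eq_mul]
    have hb2 : ∑ x ∈ G.neighborFinset v \ friends G Δ ε v,
        ((G.neighborFinset x \ G.neighborFinset v).card : ℝ)
        ≤ ((G.neighborFinset v \ friends G Δ ε v).card : ℝ) * (Δ:ℝ) := by
      calc _ ≤ (G.neighborFinset v \ friends G Δ ε v).card • (Δ:ℝ) :=
            Finset.sum_le_card_nsmul _ _ _ (fun x _ => hany x)
        _ = _ := by rw [nsmul_eq_mul]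
    have hcardsdiff : ((G.neighborFinset v \ friends G Δ ε v).card : ℝ)
        = (G.degree v : ℝ) - ((friends G Δ ε v).card : ℝ) := by
      rw [Finset.card_sdiff_of_subset hFsub, G.card_neighborFinset_eq_degree]
      rw [Nat.cast_sub]
      exact Finset.card_le_card hFsub |>.trans_eq (G.card_neighborFinset_eq_degree v)
    have hdv : (G.degree v : ℝ) ≤ (Δ:ℝ) := by exact_mod_cast hΔ v
    have hfle : ((friends G Δ ε v).card : ℝ) ≤ (G.degree v : ℝ) := by
      have := Finset.card_le_card hFsub
      rw [G.card_neighborFinset_eq_degree] at this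
      exact_mod_cast this
    have hfge : (1 - ε) * (Δ:ℝ) ≤ ((friends G Δ ε v).card : ℝ) := hv
    have hΔ0 : (0:ℝ) ≤ (Δ:ℝ) := Nat.cast_nonneg _
    have final : ((friends G Δ ε v).card : ℝ) * (ε * (Δ:ℝ))
        + ((G.degree v : ℝ) - ((friends G Δ ε v).card : ℝ)) * (Δ:ℝ)
        ≤ ε * (Δ:ℝ)^2 * (2 - ε) := by
      have hx : (0:ℝ) ≤ (1 - ε) * (Δ:ℝ) := by nlinarith
      nlinarith [mul_le_mul_of_nonneg_right hdv hΔ0,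
        mul_le_mul_of_nonneg_right hfge hx]
    calc (R:ℝ) ≤ _ := hsum2
      _ = _ := hsplitsum
      _ ≤ ((G.neighborFinset v \ friends G Δ ε v).card : ℝ) * (Δ:ℝ)
          + ((friends G Δ ε v).card : ℝ) * (ε * (Δ:ℝ)) := add_le_add hb2 hb1
      _ ≤ ε * (Δ:ℝ)^2 * (2 - ε) := by rw [hcardsdiff]; linarith [final]
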